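/- Let $\chi>0$. The infimum of $\frac{1-q}{p}$ over all pairs $(p,q)$ with $0<p<\min\{1,1/\chi^2\}$ and $q_-(p)<q<q_+(p)$ (where $q_\pm(p)=\frac{1-p}{2}(1\pm\sqrt{1-p\chi^2})$) equals $1$ if $\chi\le 1$, equals $\chi$ if $1<\chi<2$, and equals $1+\chi^2/4$ if $\chi\ge 2$. -/

import Mathlib

private lemma sInf_eq_of_glb {S : Set ℝ} {L : ℝ} (hlb : ∀ z ∈ S, L ≤ z)
    (happ : ∀ ε : ℝ, 0 < ε → ∃ z ∈ S, z < L + ε) : sInf S = L := by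
  obtain ⟨z, hz, _⟩ := happ 1 one_pos
  refine le_antisymm ?_ (le_csInf ⟨z, hz⟩ hlb)
  by_contra h
  push_neg at h
  obtain ⟨w, hw, hw'⟩ := happ (sInf S - L) (by linarith)
  have := csInf_le ⟨L, hlb⟩ hw
  linarith

set_option maxHeartbeats 2000000 in
theorem inf_one_sub_q_div_p (χ : ℝ) (hχ : 0 < χ) :
    sInf {z : ℝ | ∃ p q : ℝ, 0 < p ∧ p < min 1 (1 / χ^2) ∧
        (1 - p) / 2 * (1 - Real.sqrt (1 - p * χ^2)) < q ∧
        q < (1 - p) / 2 * (1 + Real.sqrt (1 - p * χ^2)) ∧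
        z = (1 - q) / p} =
      if χ ≤ 1 then 1 else if χ < 2 then χ else 1 + χ^2 / 4 := by
  have hχ2 : 0 < χ^2 := by positivity
  rcases le_or_gt χ 1 with h1 | h1
  · rw [if_pos h1]
    have hχ2le : χ^2 ≤ 1 := by nlinarith
    apply sInf_eq_of_glb
    · rintro z ⟨p, q, hp, hpm, hq1, hq2, rfl⟩
      obtain ⟨hp1, hp2⟩ := lt_min_iff.mp hpm
      have hpχ : p * χ^2 < 1 := (lt_div_iff₀ hχ2).mp hp2
      set s := Real.sqrt (1 - p * χ^2) with hs
      have hs0 : 0 ≤ s := Real.sqrt_nonneg _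
      have hs2 : s^2 = 1 - p * χ^2 := Real.sq_sqrt (by linarith)
      have hs1 : s ≤ 1 := by nlinarith
      rw [le_div_iff₀ hp]
      nlinarith
    · intro ε hε
      set δ : ℝ := min ε 1 / 2 with hδdef
      have hδ1 : δ ≤ ε / 2 := by
        have := min_le_left ε 1; simp only [hδdef]; linarith
      have hδ2 : δ ≤ 1 / 2 := by
        have := min_le_right ε 1; simp only [hδdef]; linarith
      have hδ0 : 0 < δ := by
        have := lt_min hε one_pos; simp only [hδdef]; linarith
      set p : ℝ := 1 - δ with hpdef
      have hp : 0 < p := by simp only [hpdef]; linarith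
      have hp1 : p < 1 := by simp only [hpdef]; linarith
      have hpχ : p * χ^2 < 1 := by nlinarith
      have hsp : 0 < Real.sqrt (1 - p * χ^2) := Real.sqrt_pos.mpr (by linarith)
      refine ⟨(1 - δ/2) / p, ⟨p, δ/2, hp, lt_min hp1 ((lt_div_iff₀ hχ2).mpr hpχ),
        ?_, ?_, by norm_num⟩, ?_⟩
      · have h1p : 1 - p = δ := by simp [hpdef]
        rw [h1p]; nlinarith
      · have h1p : 1 - p = δ := by simp [hpdef]
        rw [h1p]; nlinarith
      · rw [div_lt_iff₀ hp]
        simp only [hpdef]; nlinarith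
  · rw [if_neg (not_le.mpr h1)]
    rcases lt_or_ge χ 2 with h2 | h2
    · rw [if_pos h2]
      apply sInf_eq_of_glb
      · rintro z ⟨p, q, hp, hpm, hq1, hq2, rfl⟩
        obtain ⟨hp1, hp2⟩ := lt_min_iff.mp hpm
        have hpχ : p * χ^2 < 1 := (lt_div_iff₀ hχ2).mp hp2
        set s := Real.sqrt (1 - p * χ^2) with hs
        have hs0 : 0 ≤ s := Real.sqrt_nonneg _
        have hs2 : s^2 = 1 - p * χ^2 := Real.sq_sqrt (by linarith)
        have hs1 : s ≤ 1 := by nlinarith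
        rw [le_div_iff₀ hp]
        nlinarith [mul_nonneg (by linarith : (0:ℝ) ≤ 1 - s) (sq_nonneg (χ - 1 - s))]
      · intro ε hε
        set p : ℝ := (2 - χ) / χ with hpdef
        have hp : 0 < p := div_pos (by linarith) hχ
        have hp1 : p < 1 := by
          rw [hpdef, div_lt_one hχ]; linarith
        have hpχ : p * χ^2 < 1 := by
          have e : p * χ^2 = (2 - χ) * χ := by
            rw [hpdef]; field_simp
          nlinarith [sq_nonneg (χ - 1)]
        have hpχ1 : p * χ = 2 - χ := by
          rw [hpdef]; field_simp
        have hsqrt : Real.sqrt (1 - p * χ^2) = χ - 1 := by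
          have e : 1 - p * χ^2 = (χ - 1)^2 := by
            rw [hpdef]; field_simp; ring
          rw [e, Real.sqrt_sq (by linarith)]
        have h1p0 : 0 < 1 - p := by linarith
        set η : ℝ := min (ε * p / 2) ((1 - p) * (χ - 1) / 2) with hηdef
        have hη0 : 0 < η := by
          apply lt_min (by positivity)
          have := mul_pos h1p0 (show (0:ℝ) < χ - 1 by linarith)
          linarith
        have hη1 : η ≤ ε * p / 2 := min_le_left _ _
        have hη2 : η ≤ (1 - p) * (χ - 1) / 2 := min_le_right _ _
        refine ⟨(1 - (χ - 1 - η)) / p, ⟨p, χ - 1 - η, hp,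
          lt_min hp1 ((lt_div_iff₀ hχ2).mpr hpχ), ?_, ?_, rfl⟩, ?_⟩
        · rw [hsqrt]
          have := mul_pos h1p0 (show (0:ℝ) < χ - 1 by linarith)
          nlinarith [hpχ1]
        · rw [hsqrt]
          nlinarith [hpχ1]
        · rw [div_lt_iff₀ hp]
          have hεp : 0 < ε * p := mul_pos hε hp
          nlinarith [hpχ1]
    · rw [if_neg (not_lt.mpr h2)]
      have hχ4 : 4 ≤ χ^2 := by nlinarith
      apply sInf_eq_of_glb
      · rintro z ⟨p, q, hp, hpm, hq1, hq2, rfl⟩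
        obtain ⟨hp1, hp2⟩ := lt_min_iff.mp hpm
        have hpχ : p * χ^2 < 1 := (lt_div_iff₀ hχ2).mp hp2
        set s := Real.sqrt (1 - p * χ^2) with hs
        have hs0 : 0 ≤ s := Real.sqrt_nonneg _
        have hs2 : s^2 = 1 - p * χ^2 := Real.sq_sqrt (by linarith)
        have hs1 : s ≤ 1 := by nlinarith
        have h4 : 0 ≤ χ^2/2 - 1 - s := by linarith
        have id : χ^2 * ((1 - s) + p * (1 + s) - 2 * p * (1 + χ^2/4))
            = (1 - s)^2 * (χ^2/2 - 1 - s) := by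
          linear_combination (s - 1 - χ^2/2) * hs2
        have hnn : 0 ≤ (1 - s)^2 * (χ^2/2 - 1 - s) :=
          mul_nonneg (sq_nonneg _) h4
        have hX : 0 ≤ (1 - s) + p * (1 + s) - 2 * p * (1 + χ^2/4) :=
          (mul_nonneg_iff_of_pos_left hχ2).mp (by rw [id]; exact hnn)
        rw [le_div_iff₀ hp]
        have e : 1 - (1 - p) / 2 * (1 + s) = ((1 - s) + p * (1 + s)) / 2 := by ring
        linarith [hX, hq2, e]
      · intro ε hε
        set p : ℝ := min (2 * ε / χ^4) (1 / (2 * χ^2)) with hpdef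
        have hχ40 : (0:ℝ) < χ^4 := by positivity
        have hp : 0 < p := lt_min (by positivity) (by positivity)
        have hpa : p ≤ 2 * ε / χ^4 := min_le_left _ _
        have hpb : p ≤ 1 / (2 * χ^2) := min_le_right _ _
        have hpχ2 : p * χ^2 ≤ 1/2 := by
          have h := mul_le_mul_of_nonneg_right hpb hχ2.le
          have e : 1 / (2 * χ^2) * χ^2 = 1/2 := by field_simp
          linarith
        have hp1 : p < 1 := by
          nlinarith [mul_nonneg (by linarith : (0:ℝ) ≤ χ^2 - 4) hp.le]
        have hp2 : p < 1 / χ^2 := (lt_div_iff₀ hχ2).mpr (by linarith)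
        have hpχ : p * χ^2 < 1 := by linarith
        have hs0' : 0 < Real.sqrt (1 - p * χ^2) := Real.sqrt_pos.mpr (by linarith)
        set s := Real.sqrt (1 - p * χ^2) with hs
        have hs0 : 0 < s := hs0'
        have hs2 : s^2 = 1 - p * χ^2 := Real.sq_sqrt (by linarith)
        have hs1 : s ≤ 1 := by nlinarith
        set η : ℝ := min (ε * p / 4) ((1 - p) * s / 2) with hηdef
        have hη0 : 0 < η := by
          apply lt_min (by positivity)
          have := mul_pos (show (0:ℝ) < 1 - p by linarith) hs0
          linarith
        have hη1 : η ≤ ε * p / 4 := min_le_left _ _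
        have hη2 : η ≤ (1 - p) * s / 2 := min_le_right _ _
        refine ⟨(1 - ((1 - p) / 2 * (1 + s) - η)) / p, ⟨p, (1 - p) / 2 * (1 + s) - η, hp,
          lt_min hp1 hp2, ?_, ?_, rfl⟩, ?_⟩
        · rw [← hs]
          have := mul_pos (show (0:ℝ) < 1 - p by linarith) hs0
          nlinarith
        · rw [← hs]
          linarith
        · rw [div_lt_iff₀ hp]
          have h1s : 1 - s ≤ p * χ^2 := by nlinarith
          have hA : (1 - s)^2 ≤ (p * χ^2)^2 := by nlinarith
          have h4 : 0 ≤ χ^2/2 - 1 - s := by linarith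
          have hC : (1 - s)^2 * (χ^2/2 - 1 - s) ≤ (p * χ^2)^2 * (χ^2/2) :=
            mul_le_mul hA (by linarith) h4 (by positivity)
          have id : χ^2 * ((1 - s) + p * (1 + s) - 2 * p * (1 + χ^2/4))
              = (1 - s)^2 * (χ^2/2 - 1 - s) := by
            linear_combination (s - 1 - χ^2/2) * hs2
          have key : (1 - s) + p * (1 + s) - 2 * p * (1 + χ^2/4) ≤ p^2 * χ^4 / 2 :=
            le_of_mul_le_mul_left (by rw [id]; calc (1 - s)^2 * (χ^2/2 - 1 - s)
                  ≤ (p * χ^2)^2 * (χ^2/2) := hC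
                _ = χ^2 * (p^2 * χ^4 / 2) := by ring) hχ2
          have hεp : p * χ^4 ≤ 2 * ε := by
            have h := mul_le_mul_of_nonneg_right hpa hχ40.le
            have e : 2 * ε / χ^4 * χ^4 = 2 * ε := by field_simp
            linarith
          have hεp2 : p^2 * χ^4 ≤ 2 * ε * p := by
            have := mul_le_mul_of_nonneg_left hεp hp.le
            nlinarith
          nlinarith [key, hη1, hεp2]
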